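/- Let K be a field of characteristic 0, let Q ∈ K[x] be a nonzero polynomial, let α be a natural number, let f ∈ K[[y]] be a formal power series, and let S ∈ 𝓔_α(Q) have zero constant term (S(0) = 0). Then the composition f(S) (substitution of S into f), which is a well-defined element of K(x)[[y]], belongs to 𝓔_α(Q). -/

import Mathlib

open Polynomial PowerSeries

/-- `𝓔_α(Q)`: the set of power series in `K(x)[[y]]` of the form
`Σ_n c_n(x) yⁿ / Q(x)ⁿ` with `deg c_n ≤ n·α`. -/
def Ecal (K : Type*) [Field K] (α : ℕ) (Q : Polynomial K) :
    Set (PowerSeries (RatFunc K)) :=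
  {A | ∃ c : ℕ → Polynomial K, (∀ n, (c n).natDegree ≤ n * α) ∧
    ∀ n, PowerSeries.coeff (R := RatFunc K) n A =
      algebraMap (Polynomial K) (RatFunc K) (c n) /
        (algebraMap (Polynomial K) (RatFunc K) Q) ^ n}

/-- Composition (substitution) `f(S)` of power series; this gives the usual
composition whenever `S` has zero constant term. -/
noncomputable def PowerSeries.comp {R : Type*} [CommSemiring R]
    (f S : PowerSeries R) : PowerSeries R :=
  PowerSeries.mk fun k =>
    ∑ n ∈ Finset.range (k + 1), PowerSeries.coeff (R := R) n f * PowerSeries.coeff (R := R) k (S ^ n)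

lemma Ecal_mul {K : Type*} [Field K] {α : ℕ} {Q : Polynomial K} (hQ : Q ≠ 0)
    {A B : PowerSeries (RatFunc K)} (hA : A ∈ Ecal K α Q) (hB : B ∈ Ecal K α Q) :
    A * B ∈ Ecal K α Q := by
  obtain ⟨c, hc, hcA⟩ := hA
  obtain ⟨d, hd, hdB⟩ := hB
  refine ⟨fun k => ∑ ij ∈ Finset.HasAntidiagonal.antidiagonal k, c ij.1 * d ij.2, ?_, ?_⟩
  · intro k
    apply Polynomial.natDegree_sum_le_of_forall_le
    rintro ⟨i, j⟩ hij
    have hij' : i + j = k := Finset.HasAntidiagonal.mem_antidiagonal.mp hij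
    calc (c i * d j).natDegree ≤ (c i).natDegree + (d j).natDegree :=
          Polynomial.natDegree_mul_le
      _ ≤ i * α + j * α := add_le_add (hc i) (hd j)
      _ = k * α := by rw [← add_mul, hij']
  · intro k
    have hQ' : algebraMap (Polynomial K) (RatFunc K) Q ≠ 0 := by
      simpa using hQ
    rw [PowerSeries.coeff_mul, map_sum, Finset.sum_div]
    apply Finset.sum_congr rfl
    rintro ⟨i, j⟩ hij
    have hij' : i + j = k := Finset.HasAntidiagonal.mem_antidiagonal.mp hij
    rw [hcA, hdB, map_mul, ← hij', pow_add]
    field_simp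

lemma Ecal_pow {K : Type*} [Field K] {α : ℕ} {Q : Polynomial K} (hQ : Q ≠ 0)
    {S : PowerSeries (RatFunc K)} (hS : S ∈ Ecal K α Q) (n : ℕ) :
    S ^ n ∈ Ecal K α Q := by
  induction n with
  | zero =>
    refine ⟨fun k => if k = 0 then 1 else 0, ?_, ?_⟩
    · intro k; dsimp only; split <;> simp
    · intro k
      rw [pow_zero, PowerSeries.coeff_one]
      split <;> simp_all
  | succ n ih =>
    rw [pow_succ]
    exact Ecal_mul hQ ih hS

theorem Ecal_comp (K : Type*) [Field K] [CharZero K]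
    (Q : Polynomial K) (hQ : Q ≠ 0) (α : ℕ)
    (f : PowerSeries K) (S : PowerSeries (RatFunc K))
    (hS : S ∈ Ecal K α Q) (hS0 : PowerSeries.constantCoeff (R := RatFunc K) S = 0) :
    PowerSeries.comp (PowerSeries.map (algebraMap K (RatFunc K)) f) S ∈ Ecal K α Q := by
  choose d hd hdc using fun n => Ecal_pow hQ hS n
  refine ⟨fun k => ∑ n ∈ Finset.range (k + 1),
      Polynomial.C (PowerSeries.coeff (R := K) n f) * d n k, ?_, ?_⟩
  · intro k
    apply Polynomial.natDegree_sum_le_of_forall_le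
    intro n _
    calc (Polynomial.C (PowerSeries.coeff (R := K) n f) * d n k).natDegree
        ≤ (Polynomial.C (PowerSeries.coeff (R := K) n f)).natDegree + (d n k).natDegree :=
          Polynomial.natDegree_mul_le
      _ ≤ 0 + k * α := add_le_add (le_of_eq (Polynomial.natDegree_C _)) (hd n k)
      _ = k * α := zero_add _
  · intro k
    rw [PowerSeries.comp, PowerSeries.coeff_mk, map_sum, Finset.sum_div]
    apply Finset.sum_congr rfl
    intro n _
    rw [PowerSeries.coeff_map, hdc n k, map_mul, mul_div_assoc]
    congr 1
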